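/- For a ∈ ℝ^{n+1} define q(a) ∈ ℝ^{n+1} by q_k(a) := Σ_{i=0}^{n−k} a_i a_{i+k} for k = 0, …, n (the coefficients of a(z) a(z^{−1})). Then: (i) the Jacobian matrix J(a) := [∂q_i(a)/∂a_j]_{i,j=0}^n equals the sum of the Hankel matrix with (i,j) entry a_{i+j} (with a_k := 0 for k > n) and the upper-triangular Toeplitz matrix with (i,j) entry a_{j−i} for j ≥ i and 0 otherwise; (ii) J(a) is nonsingular for every Schur vector a; (iii) for every a with a(ζ_j) ≠ 0 for all j, the chain rule ∇𝕁_P(a) = J(a)ᵀ ∇F(q(a)) holds, where F(q) := c_0 q_0 + 2 Σ_{k=1}^n c_k q_k − (1/2N) Σ_{j=−N+1}^N P(ζ_j) log Q(ζ_j) and Q(ζ) := Σ_{k=−n}^n q_{|k|} ζ^{−k}. -/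

import Mathlib

open Finset Complex Matrix

noncomputable section

/-- The point `ζ_j = exp(iπ j / N)` of the discrete unit circle `𝕋_{2N}`. -/
def zeta (N : ℕ) (j : ℤ) : ℂ := Complex.exp (Real.pi * Complex.I * j / N)

/-- The index set `j = -N+1, …, N`. -/
def Idx (N : ℕ) : Finset ℤ := Finset.Icc (-(N : ℤ) + 1) (N : ℤ)

/-- `a(ζ) = Σ_{k=0}^n a_k ζ^{-k}`. -/
def evC {n : ℕ} (a : Fin (n + 1) → ℝ) (z : ℂ) : ℂ :=
  ∑ k : Fin (n + 1), (a k : ℂ) * z ^ (-(k.val : ℤ))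

/-- The symmetric Toeplitz matrix `T_n` with `(i,j)` entry `c_{|i-j|}`. -/
def Toep {n : ℕ} (c : Fin (n + 1) → ℝ) : Matrix (Fin (n + 1)) (Fin (n + 1)) ℝ :=
  fun i j => c ⟨max ((i : ℕ) - (j : ℕ)) ((j : ℕ) - (i : ℕ)),
    by have := i.isLt; have := j.isLt; omega⟩

/-- `P(ζ) = b(ζ) b(ζ^{-1})`. -/
def PPd {n : ℕ} (b : Fin (n + 1) → ℝ) (z : ℂ) : ℂ := evC b z * evC b z⁻¹

/-- `𝕁_P(a) = aᵀ T_n a − (1/2N) Σ_j P(ζ_j) log( a(ζ_j) a(ζ_j^{-1}) )`. -/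
def Jd (N : ℕ) {n : ℕ} (c b a : Fin (n + 1) → ℝ) : ℝ :=
  dotProduct a ((Toep c).mulVec a) -
    (∑ j ∈ Idx N, (PPd b (zeta N j)).re *
        Real.log ((evC a (zeta N j) * evC a (zeta N j)⁻¹).re)) / (2 * N)

/-- `γ_t(a) = (1/2N) Σ_j ζ_j^t b(ζ_j)/a(ζ_j)` (a real number). -/
def gam (N : ℕ) {n : ℕ} (b a : Fin (n + 1) → ℝ) (t : ℤ) : ℝ :=
  ((∑ j ∈ Idx N, zeta N j ^ t * evC b (zeta N j) / evC a (zeta N j)) / (2 * N)).re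

/-- The matrix `T_γ(a)` with `(i,j)` entry `γ_{j−i}(a)`. -/
def Tgam (N : ℕ) {n : ℕ} (b a : Fin (n + 1) → ℝ) :
    Matrix (Fin (n + 1)) (Fin (n + 1)) ℝ :=
  fun i j => gam N b a ((j.val : ℤ) - (i.val : ℤ))

/-- `c̃_k(a) = (1/2N) Σ_j ζ_j^k P(ζ_j)/( a(ζ_j) a(ζ_j^{-1}) )` (a real number). -/
def ctil (N : ℕ) {n : ℕ} (b a : Fin (n + 1) → ℝ) (k : ℤ) : ℝ :=
  ((∑ j ∈ Idx N, zeta N j ^ k * PPd b (zeta N j) /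
      (evC a (zeta N j) * evC a (zeta N j)⁻¹)) / (2 * N)).re

/-- The symmetric Toeplitz matrix `T_n(a)` with `(i,j)` entry `c̃_{|i−j|}(a)`. -/
def TnA (N : ℕ) {n : ℕ} (b a : Fin (n + 1) → ℝ) :
    Matrix (Fin (n + 1)) (Fin (n + 1)) ℝ :=
  fun i j => ctil N b a ((max ((i : ℕ) - (j : ℕ)) ((j : ℕ) - (i : ℕ)) : ℕ) : ℤ)


/-- The symmetric pseudo-polynomial `Σ_{k=-n}^n q_{|k|} ζ^{-k}`. -/
def ppC {n : ℕ} (q : Fin (n + 1) → ℝ) (z : ℂ) : ℂ :=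
  ∑ k : Fin (n + 1), (q k : ℂ) * (z ^ (k.val : ℤ) + z ^ (-(k.val : ℤ))) - (q 0 : ℂ)

/-- `a` is Schur. -/
def SchurVec {n : ℕ} (a : Fin (n + 1) → ℝ) : Prop :=
  0 < a 0 ∧ ∀ z : ℂ,
    (∑ k : Fin (n + 1), (a k : ℂ) * z ^ (n - k.val)) = 0 → ‖z‖ < 1

/-- `q_k(a) = Σ_{i=0}^{n−k} a_i a_{i+k}`, the coefficients of `a(z) a(z⁻¹)`. -/
def qc {n : ℕ} (a : Fin (n + 1) → ℝ) : Fin (n + 1) → ℝ :=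
  fun k => ∑ i : Fin (n + 1),
    if h : (i : ℕ) + (k : ℕ) ≤ n then a i * a ⟨(i : ℕ) + (k : ℕ), by omega⟩ else 0

/-- The Jacobian matrix `J(a) = [∂q_i(a)/∂a_j]`. -/
def JacQ {n : ℕ} (a : Fin (n + 1) → ℝ) : Matrix (Fin (n + 1)) (Fin (n + 1)) ℝ :=
  fun i j => fderiv ℝ (fun x => qc x i) a (Pi.single j 1)

/-- The Hankel matrix with `(i,j)` entry `a_{i+j}` (`a_k := 0` for `k > n`). -/
def Hank {n : ℕ} (a : Fin (n + 1) → ℝ) : Matrix (Fin (n + 1)) (Fin (n + 1)) ℝ :=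
  fun i j => if h : (i : ℕ) + (j : ℕ) ≤ n then a ⟨(i : ℕ) + (j : ℕ), by omega⟩ else 0

/-- The upper-triangular Toeplitz matrix with `(i,j)` entry `a_{j−i}` for `j ≥ i`. -/
def UTToep {n : ℕ} (a : Fin (n + 1) → ℝ) : Matrix (Fin (n + 1)) (Fin (n + 1)) ℝ :=
  fun i j => if h : (i : ℕ) ≤ (j : ℕ) then
    a ⟨(j : ℕ) - (i : ℕ), by have := j.isLt; omega⟩ else 0

/-- The pairing `⟨c, p⟩`. -/
def pairCP {n : ℕ} (c p : Fin (n + 1) → ℝ) : ℝ :=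
  2 * ∑ k : Fin (n + 1), c k * p k - c 0 * p 0

/-- `F(q) = c_0 q_0 + 2 Σ_{k=1}^n c_k q_k − (1/2N) Σ_j P(ζ_j) log Q(ζ_j)`,
with `P(ζ) = b(ζ) b(ζ^{-1})` and `Q(ζ) = Σ_{k=-n}^n q_{|k|} ζ^{-k}`. -/
def Fd (N : ℕ) {n : ℕ} (c b q : Fin (n + 1) → ℝ) : ℝ :=
  pairCP c q -
    (∑ j ∈ Idx N, (PPd b (zeta N j)).re * Real.log ((ppC q (zeta N j)).re)) / (2 * N)

/-- The gradient vector of a functional on `ℝ^{n+1}`. -/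
def gradVec {n : ℕ} (f : (Fin (n + 1) → ℝ) → ℝ) (a : Fin (n + 1) → ℝ) :
    Fin (n + 1) → ℝ :=
  fun i => fderiv ℝ f a (Pi.single i 1)

/-- extension of a vector by zero -/
def aR (n : ℕ) (a : Fin (n+1) → ℝ) (m : ℕ) : ℝ := if h : m ≤ n then a ⟨m, by omega⟩ else 0

lemma aR_of_le {n : ℕ} (a : Fin (n+1) → ℝ) {m : ℕ} (h : m ≤ n) : aR n a m = a ⟨m, by omega⟩ :=
  dif_pos h

lemma aR_fin {n : ℕ} (a : Fin (n+1) → ℝ) (k : Fin (n+1)) : aR n a k.val = a k := by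
  rw [aR_of_le a (by omega)]

lemma aR_of_gt {n : ℕ} (a : Fin (n+1) → ℝ) {m : ℕ} (h : n < m) : aR n a m = 0 :=
  dif_neg (by omega)

/-- ℝ cross-correlation with zero extension -/
def corr (n : ℕ) (a b : Fin (n+1) → ℝ) (t : ℕ) : ℝ :=
  ∑ i ∈ range (n+1), aR n a i * aR n b (i + t)

lemma shift_sum {M : Type*} [AddCommMonoid M] (m k : ℕ) (f : ℕ → M)
    (hf : ∀ l, m ≤ l → f l = 0) :
    ∑ j ∈ range m, (if k ≤ j then f j else 0) = ∑ i ∈ range m, f (k + i) := by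
  rw [← Finset.sum_filter]
  have hfil : (range m).filter (fun j => k ≤ j) = Finset.Ico k m := by
    ext j; simp [Finset.mem_filter, Finset.mem_Ico, and_comm]
  rw [hfil, Finset.sum_Ico_eq_sum_range]
  apply Finset.sum_subset
  · intro t ht; simp only [Finset.mem_range] at *; omega
  · intro t ht ht'; simp only [Finset.mem_range] at *
    exact hf _ (by omega)

lemma half_sum {M : Type*} [AddCommMonoid M] (m : ℕ) (F : ℕ → ℕ → M)
    (hF : ∀ k l, m ≤ l → F k l = 0) :
    ∑ k ∈ range m, ∑ l ∈ range m, (if k ≤ l then F k l else 0)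
      = ∑ k ∈ range m, ∑ t ∈ range m, F k (k + t) := by
  refine Finset.sum_congr rfl fun k hk => ?_
  exact shift_sum m k (F k) (fun l hl => hF k l hl)

lemma full_split {M : Type*} [AddCommGroup M] (m : ℕ) (F : ℕ → ℕ → M) :
    ∑ k ∈ range m, ∑ l ∈ range m, F k l
      = ((∑ k ∈ range m, ∑ l ∈ range m, (if k ≤ l then F k l else 0))
        + ∑ k ∈ range m, ∑ l ∈ range m, (if l ≤ k then F k l else 0))
        - ∑ k ∈ range m, F k k := by
  have key : ∀ k l : ℕ, F k l = ((if k ≤ l then F k l else 0) + (if l ≤ k then F k l else 0))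
      - (if l = k then F k l else 0) := by
    intro k l
    rcases lt_trichotomy k l with h | h | h
    · simp [le_of_lt h, not_le.2 h, h.ne']
    · simp [h]
    · simp [le_of_lt h, not_le.2 h, h.ne]
  have : ∑ k ∈ range m, ∑ l ∈ range m, F k l
      = ∑ k ∈ range m, ∑ l ∈ range m, (((if k ≤ l then F k l else 0) + (if l ≤ k then F k l else 0))
        - (if l = k then F k l else 0)) := by
    refine Finset.sum_congr rfl fun k _ => Finset.sum_congr rfl fun l _ => key k l
  rw [this]
  simp only [Finset.sum_sub_distrib, Finset.sum_add_distrib]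
  congr 1
  refine Finset.sum_congr rfl fun k hk => ?_
  rw [Finset.sum_ite_eq' (range m) k (fun l => F k l)]
  simp [Finset.mem_range.1 hk]


lemma evC_range {n : ℕ} (a : Fin (n+1) → ℝ) (z : ℂ) :
    evC a z = ∑ k ∈ range (n+1), ((aR n a k : ℝ) : ℂ) * z ^ (-(k:ℤ)) := by
  rw [evC, ← Fin.sum_univ_eq_sum_range (fun k => ((aR n a k : ℝ) : ℂ) * z ^ (-(k:ℤ)))]
  exact Finset.sum_congr rfl fun k _ => by rw [aR_fin]

lemma evC_mul {n : ℕ} (a b : Fin (n+1) → ℝ) (z : ℂ) (hz : z ≠ 0) :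
    evC a z * evC b z⁻¹
      = ∑ t ∈ range (n+1), ((corr n a b t : ℝ) : ℂ) * z ^ (t:ℤ)
        + ∑ t ∈ range (n+1), ((corr n b a t : ℝ) : ℂ) * z ^ (-(t:ℤ))
        - ((corr n a b 0 : ℝ) : ℂ) := by
  have hinv : ∀ l : ℕ, (z⁻¹) ^ (-(l:ℤ)) = z ^ (l:ℤ) := by
    intro l; rw [_root_.zpow_neg, _root_.inv_zpow, inv_inv]
  set F : ℕ → ℕ → ℂ := fun k l => ((aR n a k : ℝ) : ℂ) * ((aR n b l : ℝ) : ℂ) * z ^ ((l:ℤ) - (k:ℤ)) with hF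
  have hF2 : ∀ k l, n+1 ≤ l → F k l = 0 := by
    intro k l hl; simp [hF, aR_of_gt b (show n < l by omega)]
  have hF1 : ∀ k l, n+1 ≤ k → F k l = 0 := by
    intro k l hk; simp [hF, aR_of_gt a (show n < k by omega)]
  have lhs : evC a z * evC b z⁻¹ = ∑ k ∈ range (n+1), ∑ l ∈ range (n+1), F k l := by
    rw [evC_range, evC_range, Finset.sum_mul_sum]
    refine Finset.sum_congr rfl fun k _ => Finset.sum_congr rfl fun l _ => ?_
    rw [hinv l, hF]
    rw [mul_mul_mul_comm, ← zpow_add₀ hz, show (-(k:ℤ) + (l:ℤ)) = ((l:ℤ)-(k:ℤ)) by ring]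
  rw [lhs, full_split (n+1) F]
  congr 1
  · congr 1
    · -- first half
      rw [half_sum (n+1) F hF2]
      rw [Finset.sum_comm]
      refine Finset.sum_congr rfl fun t _ => ?_
      rw [corr]
      push_cast
      rw [Finset.sum_mul]
      refine Finset.sum_congr rfl fun k _ => ?_
      simp only [hF]
      have : ((k+t : ℕ):ℤ) - (k:ℤ) = (t:ℤ) := by push_cast; ring
      rw [this]
    · -- second half
      have : ∑ k ∈ range (n+1), ∑ l ∈ range (n+1), (if l ≤ k then F k l else 0)
          = ∑ l ∈ range (n+1), ∑ k ∈ range (n+1), (if l ≤ k then F k l else 0) :=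
        Finset.sum_comm
      rw [this, half_sum (n+1) (fun l k => F k l) (fun k l hl => hF1 l k hl)]
      rw [Finset.sum_comm]
      refine Finset.sum_congr rfl fun t _ => ?_
      rw [corr]
      push_cast
      rw [Finset.sum_mul]
      refine Finset.sum_congr rfl fun p _ => ?_
      simp only [hF]
      have : ((p : ℕ):ℤ) - ((p+t:ℕ):ℤ) = -(t:ℤ) := by push_cast; ring
      rw [this]; ring
  · -- diagonal
    rw [corr]
    push_cast
    refine Finset.sum_congr rfl fun k _ => ?_
    simp [hF]


/-- the derivative of `x ↦ qc x i` -/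
def Lq (n : ℕ) (a : Fin (n+1) → ℝ) (i : Fin (n+1)) : (Fin (n+1) → ℝ) →L[ℝ] ℝ :=
  ∑ p : Fin (n+1), if h : (p:ℕ) + (i:ℕ) ≤ n then
    (a p • ContinuousLinearMap.proj (R := ℝ) (φ := fun _ : Fin (n+1) => ℝ)
        (⟨(p:ℕ)+(i:ℕ), by omega⟩ : Fin (n+1))
      + a ⟨(p:ℕ)+(i:ℕ), by omega⟩ • ContinuousLinearMap.proj p) else 0

lemma hasFDerivAt_qc {n : ℕ} (a : Fin (n+1) → ℝ) (i : Fin (n+1)) :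
    HasFDerivAt (fun x => qc x i) (Lq n a i) a := by
  rw [Lq]
  apply HasFDerivAt.fun_sum
  intro p _
  by_cases h : (p:ℕ) + (i:ℕ) ≤ n
  · simp only [dif_pos h]
    exact ((ContinuousLinearMap.proj p).hasFDerivAt (x := a)).mul
      ((ContinuousLinearMap.proj (R := ℝ) (φ := fun _ : Fin (n+1) => ℝ)
        (⟨(p:ℕ)+(i:ℕ), by omega⟩ : Fin (n+1))).hasFDerivAt (x := a))
  · simp only [dif_neg h]
    exact hasFDerivAt_const 0 a

lemma jacQ_eq {n : ℕ} (a : Fin (n+1) → ℝ) : JacQ a = Hank a + UTToep a := by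
  ext i j
  have hf : fderiv ℝ (fun x => qc x i) a = Lq n a i := (hasFDerivAt_qc a i).fderiv
  have key : ∀ p : Fin (n+1),
      (if h : (p:ℕ) + (i:ℕ) ≤ n then
        (a p • ContinuousLinearMap.proj (R := ℝ) (φ := fun _ : Fin (n+1) => ℝ)
            (⟨(p:ℕ)+(i:ℕ), by omega⟩ : Fin (n+1))
          + a ⟨(p:ℕ)+(i:ℕ), by omega⟩ • ContinuousLinearMap.proj p) else 0 :
          (Fin (n+1) → ℝ) →L[ℝ] ℝ) (Pi.single j 1)
      = (if (p:ℕ) + (i:ℕ) = (j:ℕ) then a p else 0)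
        + (if p = j then aR n a ((p:ℕ)+(i:ℕ)) else 0) := by
    intro p
    by_cases h : (p:ℕ) + (i:ℕ) ≤ n
    · simp only [dif_pos h, ContinuousLinearMap.add_apply, ContinuousLinearMap.smul_apply,
        ContinuousLinearMap.proj_apply, Pi.single_apply, smul_eq_mul, aR, dif_pos h]
      congr 1
      · by_cases hc : ((⟨(p:ℕ)+(i:ℕ), by omega⟩ : Fin (n+1)) : Fin (n+1)) = j
        · rw [if_pos hc, if_pos (by simpa [Fin.ext_iff] using hc)]; ring
        · rw [if_neg hc, if_neg (by simpa [Fin.ext_iff] using hc)]; ring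
      · by_cases hc : p = j
        · rw [if_pos hc, if_pos hc]; ring
        · rw [if_neg hc, if_neg hc]; ring
    · simp only [dif_neg h, ContinuousLinearMap.zero_apply, aR, dif_neg h]
      have h1 : ¬((p:ℕ) + (i:ℕ) = (j:ℕ)) := by have := j.isLt; omega
      simp [h1]
  show fderiv ℝ (fun x => qc x i) a (Pi.single j 1) = Hank a i j + UTToep a i j
  rw [hf, Lq, ContinuousLinearMap.sum_apply]
  calc ∑ p : Fin (n+1), _ = ∑ p : Fin (n+1), ((if (p:ℕ) + (i:ℕ) = (j:ℕ) then a p else 0)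
        + (if p = j then aR n a ((p:ℕ)+(i:ℕ)) else 0)) := Finset.sum_congr rfl fun p _ => key p
    _ = Hank a i j + UTToep a i j := by
        rw [Finset.sum_add_distrib]
        rw [add_comm]
        congr 1
        · rw [Finset.sum_ite_eq' Finset.univ j (fun p => aR n a ((p:ℕ)+(i:ℕ)))]
          simp only [Finset.mem_univ, if_true]
          rw [Hank, aR]
          have hc : (j:ℕ) + (i:ℕ) = (i:ℕ) + (j:ℕ) := Nat.add_comm _ _
          rw [hc]
        · rw [UTToep]
          by_cases hij : (i:ℕ) ≤ (j:ℕ)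
          · have : ∀ p : Fin (n+1), ((p:ℕ) + (i:ℕ) = (j:ℕ)) ↔
                p = (⟨(j:ℕ) - (i:ℕ), by have := j.isLt; omega⟩ : Fin (n+1)) := by
              intro p; rw [Fin.ext_iff]; simp; omega
            calc ∑ p : Fin (n+1), (if (p:ℕ) + (i:ℕ) = (j:ℕ) then a p else 0)
                = ∑ p : Fin (n+1), (if p = (⟨(j:ℕ) - (i:ℕ), by have := j.isLt; omega⟩ : Fin (n+1)) then a p else 0) :=
                  Finset.sum_congr rfl fun p _ => by simp only [this p]
              _ = _ := by
                  rw [Finset.sum_ite_eq' Finset.univ _ (fun p => a p)]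
                  simp only [Finset.mem_univ, if_true]
                  rw [dif_pos hij]
          · rw [dif_neg hij]
            refine Finset.sum_eq_zero fun p _ => ?_
            rw [if_neg (by omega)]


lemma hank_mulVec {n : ℕ} (a v : Fin (n+1) → ℝ) (k : Fin (n+1)) :
    ((Hank a).mulVec v) k = corr n v a k.val := by
  show ∑ j, Hank a k j * v j = _
  rw [corr, ← Fin.sum_univ_eq_sum_range (fun j => aR n v j * aR n a (j + k.val))]
  refine Finset.sum_congr rfl fun j _ => ?_
  rw [aR_fin]
  have : Hank a k j = aR n a (j.val + k.val) := by
    rw [Hank, aR]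
    by_cases h : (k:ℕ) + (j:ℕ) ≤ n
    · rw [dif_pos h, dif_pos (by omega)]
      congr 1
      exact Fin.ext (by simp [Nat.add_comm])
    · rw [dif_neg h, dif_neg (by omega)]
  rw [this, mul_comm]

lemma uttoep_mulVec {n : ℕ} (a v : Fin (n+1) → ℝ) (k : Fin (n+1)) :
    ((UTToep a).mulVec v) k = corr n a v k.val := by
  show ∑ j, UTToep a k j * v j = _
  have step1 : ∀ j : Fin (n+1), UTToep a k j * v j
      = (if k.val ≤ j.val then aR n a (j.val - k.val) * aR n v j.val else 0) := by
    intro j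
    rw [UTToep]
    by_cases h : (k:ℕ) ≤ (j:ℕ)
    · rw [dif_pos h, if_pos h, aR_fin, aR]
      rw [dif_pos (by have := j.isLt; omega)]
    · rw [dif_neg h, if_neg h, zero_mul]
  calc ∑ j, UTToep a k j * v j
      = ∑ j : Fin (n+1), (fun m => if k.val ≤ m then aR n a (m - k.val) * aR n v m else 0) j.val :=
        Finset.sum_congr rfl fun j _ => step1 j
    _ = ∑ m ∈ range (n+1), (if k.val ≤ m then aR n a (m - k.val) * aR n v m else 0) :=
        Fin.sum_univ_eq_sum_range (fun m => if k.val ≤ m then aR n a (m - k.val) * aR n v m else 0) (n+1)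
    _ = ∑ i ∈ range (n+1), aR n a (k.val + i - k.val) * aR n v (k.val + i) := by
        rw [shift_sum (n+1) k.val _ (fun l hl => by rw [aR_of_gt v (by omega : n < l), mul_zero])]
    _ = corr n a v k.val := by
        rw [corr]
        refine Finset.sum_congr rfl fun i _ => ?_
        congr 1
        · congr 1; omega
        · congr 1; omega

lemma ker_evC {n : ℕ} (a v : Fin (n+1) → ℝ)
    (hv : (Hank a + UTToep a).mulVec v = 0) (z : ℂ) (hz : z ≠ 0) :
    evC a z * evC v z⁻¹ + evC v z * evC a z⁻¹ = 0 := by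
  have hker : ∀ t ∈ range (n+1), corr n a v t + corr n v a t = 0 := by
    intro t ht
    have hmem := Finset.mem_range.1 ht
    have := congrFun hv ⟨t, by omega⟩
    rw [Matrix.add_mulVec] at this
    have h2 := this
    simp only [Pi.add_apply, Pi.zero_apply] at h2
    rw [hank_mulVec, uttoep_mulVec] at h2
    simp only at h2
    linarith [h2]
  rw [evC_mul a v z hz, evC_mul v a z hz]
  have h0 := hker 0 (by simp)
  have e1 : ∀ t ∈ range (n+1),
      ((corr n a v t : ℝ) : ℂ) * z ^ (t:ℤ) + ((corr n v a t : ℝ) : ℂ) * z ^ (t:ℤ) = 0 := by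
    intro t ht
    have := hker t ht
    rw [← add_mul]
    have : ((corr n a v t : ℝ) : ℂ) + ((corr n v a t : ℝ) : ℂ) = 0 := by
      rw [← Complex.ofReal_add, this, Complex.ofReal_zero]
    rw [this, zero_mul]
  have e2 : ∀ t ∈ range (n+1),
      ((corr n v a t : ℝ) : ℂ) * z ^ (-(t:ℤ)) + ((corr n a v t : ℝ) : ℂ) * z ^ (-(t:ℤ)) = 0 := by
    intro t ht
    have := hker t ht
    rw [← add_mul]
    have : ((corr n v a t : ℝ) : ℂ) + ((corr n a v t : ℝ) : ℂ) = 0 := by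
      rw [← Complex.ofReal_add, add_comm (corr n v a t) (corr n a v t), this, Complex.ofReal_zero]
    rw [this, zero_mul]
  have s1 : ∑ t ∈ range (n+1), ((corr n a v t : ℝ) : ℂ) * z ^ (t:ℤ)
      + ∑ t ∈ range (n+1), ((corr n v a t : ℝ) : ℂ) * z ^ (t:ℤ) = 0 := by
    rw [← Finset.sum_add_distrib]
    exact Finset.sum_eq_zero e1
  have s2 : ∑ t ∈ range (n+1), ((corr n v a t : ℝ) : ℂ) * z ^ (-(t:ℤ))
      + ∑ t ∈ range (n+1), ((corr n a v t : ℝ) : ℂ) * z ^ (-(t:ℤ)) = 0 := by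
    rw [← Finset.sum_add_distrib]
    exact Finset.sum_eq_zero e2
  have c0 : ((corr n a v 0 : ℝ) : ℂ) + ((corr n v a 0 : ℝ) : ℂ) = 0 := by
    rw [← Complex.ofReal_add, h0, Complex.ofReal_zero]
  linear_combination s1 + s2 - c0

def pC (n : ℕ) (x : Fin (n+1) → ℝ) : Polynomial ℂ :=
  ∑ k : Fin (n+1), Polynomial.C ((x k : ℝ) : ℂ) * Polynomial.X ^ (n - k.val)
def ptC (n : ℕ) (x : Fin (n+1) → ℝ) : Polynomial ℂ :=
  ∑ k : Fin (n+1), Polynomial.C ((x k : ℝ) : ℂ) * Polynomial.X ^ (k.val)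

lemma coeff_pC {n : ℕ} (x : Fin (n+1) → ℝ) (j : Fin (n+1)) :
    (pC n x).coeff (n - j.val) = ((x j : ℝ) : ℂ) := by
  rw [pC, Polynomial.finset_sum_coeff]
  calc ∑ k : Fin (n+1), (Polynomial.C ((x k : ℝ):ℂ) * Polynomial.X ^ (n - k.val)).coeff (n - j.val)
      = ∑ k : Fin (n+1), if k = j then ((x k : ℝ) : ℂ) else 0 := by
        refine Finset.sum_congr rfl fun k _ => ?_
        rw [Polynomial.coeff_C_mul, Polynomial.coeff_X_pow]
        have : (n - j.val = n - k.val) ↔ (k = j) := by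
          rw [Fin.ext_iff]; have := j.isLt; have := k.isLt; omega
        by_cases hc : k = j
        · rw [if_pos (this.2 hc), if_pos hc, mul_one]
        · rw [if_neg (fun hh => hc (this.1 hh)), if_neg hc, mul_zero]
    _ = ((x j : ℝ) : ℂ) := by rw [Finset.sum_ite_eq' Finset.univ j]; simp

lemma coeff_pC_n {n : ℕ} (x : Fin (n+1) → ℝ) : (pC n x).coeff n = ((x 0 : ℝ) : ℂ) := by
  have := coeff_pC x 0
  simpa using this

lemma coeff_ptC_zero {n : ℕ} (x : Fin (n+1) → ℝ) : (ptC n x).coeff 0 = ((x 0 : ℝ) : ℂ) := by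
  rw [ptC, Polynomial.finset_sum_coeff]
  calc ∑ k : Fin (n+1), (Polynomial.C ((x k : ℝ):ℂ) * Polynomial.X ^ (k.val)).coeff 0
      = ∑ k : Fin (n+1), if k = 0 then ((x k : ℝ) : ℂ) else 0 := by
        refine Finset.sum_congr rfl fun k _ => ?_
        rw [Polynomial.coeff_C_mul, Polynomial.coeff_X_pow]
        have : (0 = k.val) ↔ (k = 0) := by rw [Fin.ext_iff, Fin.val_zero]; omega
        by_cases hc : k = 0
        · rw [if_pos (this.2 hc), if_pos hc, mul_one]
        · rw [if_neg (fun hh => hc (this.1 hh)), if_neg hc, mul_zero]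
    _ = _ := by rw [Finset.sum_ite_eq' Finset.univ 0]; simp

lemma natDegree_pC_le {n : ℕ} (x : Fin (n+1) → ℝ) : (pC n x).natDegree ≤ n :=
  Polynomial.natDegree_sum_le_of_forall_le _ _ fun k _ =>
    le_trans (Polynomial.natDegree_C_mul_X_pow_le _ _) (by omega)

lemma natDegree_ptC_le {n : ℕ} (x : Fin (n+1) → ℝ) : (ptC n x).natDegree ≤ n :=
  Polynomial.natDegree_sum_le_of_forall_le _ _ fun k _ =>
    le_trans (Polynomial.natDegree_C_mul_X_pow_le _ _) (by omega)

lemma eval_pC {n : ℕ} (x : Fin (n+1) → ℝ) (z : ℂ) (hz : z ≠ 0) :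
    (pC n x).eval z = z ^ n * evC x z := by
  rw [pC, Polynomial.eval_finset_sum, evC, Finset.mul_sum]
  refine Finset.sum_congr rfl fun k _ => ?_
  rw [Polynomial.eval_mul, Polynomial.eval_C, Polynomial.eval_pow, Polynomial.eval_X]
  have h1 : (z : ℂ) ^ (n - k.val) = z ^ ((n:ℤ) - (k.val:ℤ)) := by
    rw [← zpow_natCast]; congr 1; have := k.isLt; omega
  rw [h1, zpow_sub₀ hz, zpow_natCast]
  rw [div_eq_mul_inv, ← _root_.zpow_neg]
  ring

lemma eval_ptC {n : ℕ} (x : Fin (n+1) → ℝ) (z : ℂ) :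
    (ptC n x).eval z = evC x z⁻¹ := by
  rw [ptC, Polynomial.eval_finset_sum, evC]
  refine Finset.sum_congr rfl fun k _ => ?_
  rw [Polynomial.eval_mul, Polynomial.eval_C, Polynomial.eval_pow, Polynomial.eval_X]
  rw [_root_.zpow_neg, _root_.inv_zpow, inv_inv, zpow_natCast]

lemma pC_ne_zero {n : ℕ} (x : Fin (n+1) → ℝ) (hx : x 0 ≠ 0) : pC n x ≠ 0 := by
  intro h
  apply hx
  have := coeff_pC_n x
  rw [h, Polynomial.coeff_zero] at this
  exact_mod_cast this.symm

lemma coprime_pC_ptC {n : ℕ} (a : Fin (n+1) → ℝ) (ha : SchurVec a) :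
    IsCoprime (pC n a) (ptC n a) := by
  have ha0 : a 0 ≠ 0 := ne_of_gt ha.1
  rw [← EuclideanDomain.gcd_isUnit_iff]
  by_contra hu
  set d := EuclideanDomain.gcd (pC n a) (ptC n a) with hd
  have hd1 : d ∣ pC n a := EuclideanDomain.gcd_dvd_left _ _
  have hd2 : d ∣ ptC n a := EuclideanDomain.gcd_dvd_right _ _
  have hpa0 : pC n a ≠ 0 := pC_ne_zero a ha0
  have hd0 : d ≠ 0 := by
    intro h
    rw [h] at hd1
    exact hpa0 (zero_dvd_iff.1 hd1)
  obtain ⟨z, hz⟩ := Complex.exists_root (Polynomial.degree_pos_of_ne_zero_of_nonunit hd0 hu)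
  have hza : (pC n a).eval z = 0 := by
    obtain ⟨e, he⟩ := hd1
    rw [he, Polynomial.eval_mul, hz, zero_mul]
  have hzt : (ptC n a).eval z = 0 := by
    obtain ⟨e, he⟩ := hd2
    rw [he, Polynomial.eval_mul, hz, zero_mul]
  have habs : ‖z‖ < 1 := by
    apply ha.2
    rw [← hza, pC, Polynomial.eval_finset_sum]
    exact (Finset.sum_congr rfl fun k _ => by
      rw [Polynomial.eval_mul, Polynomial.eval_C, Polynomial.eval_pow, Polynomial.eval_X]).symm
  have hzne : z ≠ 0 := by
    intro h
    rw [h, ← Polynomial.coeff_zero_eq_eval_zero, coeff_ptC_zero] at hzt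
    exact ha0 (by exact_mod_cast hzt)
  -- eval z⁻¹ (pC n a) * z^n = eval z (ptC n a)
  have hkey : (pC n a).eval z⁻¹ * z ^ n = (ptC n a).eval z := by
    rw [pC, ptC, Polynomial.eval_finset_sum, Polynomial.eval_finset_sum, Finset.sum_mul]
    refine Finset.sum_congr rfl fun k _ => ?_
    simp only [Polynomial.eval_mul, Polynomial.eval_C, Polynomial.eval_pow, Polynomial.eval_X]
    have hzn : z ^ n = z ^ (n - k.val) * z ^ (k.val) := by
      rw [← pow_add]; congr 1; have := k.isLt; omega
    rw [inv_pow, hzn, mul_assoc, inv_mul_cancel_left₀ (pow_ne_zero _ hzne)]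
  have hinvroot : (pC n a).eval z⁻¹ = 0 := by
    have := hkey
    rw [hzt] at this
    exact (mul_eq_zero.1 this).resolve_right (pow_ne_zero _ hzne)
  have habs2 : ‖z⁻¹‖ < 1 := by
    apply ha.2
    rw [← hinvroot, pC, Polynomial.eval_finset_sum]
    exact (Finset.sum_congr rfl fun k _ => by
      rw [Polynomial.eval_mul, Polynomial.eval_C, Polynomial.eval_pow, Polynomial.eval_X]).symm
  rw [norm_inv] at habs2
  have hpos : 0 < ‖z‖ := by
    exact norm_pos_iff.2 hzne
  rw [inv_lt_one_iff₀] at habs2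
  rcases habs2 with h | h
  · linarith
  · linarith

theorem hank_uttoep_det_ne {n : ℕ} (a : Fin (n+1) → ℝ) (ha : SchurVec a) :
    (Hank a + UTToep a).det ≠ 0 := by
  intro hdet
  obtain ⟨v, hv0, hvker⟩ := Matrix.exists_mulVec_eq_zero_iff.2 hdet
  have ha0 : (a 0 : ℂ) ≠ 0 := by exact_mod_cast ne_of_gt ha.1
  have hpa0 : pC n a ≠ 0 := pC_ne_zero a (ne_of_gt ha.1)
  -- the vanishing polynomial identity
  have h0 : pC n a * ptC n v + pC n v * ptC n a = 0 := by
    apply Polynomial.eq_zero_of_infinite_isRoot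
    apply Set.Infinite.mono (s := {z : ℂ | z ≠ 0})
    · intro z hz
      simp only [Set.mem_setOf_eq] at hz ⊢
      show Polynomial.IsRoot _ z
      rw [Polynomial.IsRoot, Polynomial.eval_add, Polynomial.eval_mul, Polynomial.eval_mul,
        eval_pC a z hz, eval_pC v z hz, eval_ptC, eval_ptC]
      have := ker_evC a v hvker z hz
      ring_nf
      ring_nf at this
      linear_combination z ^ n * this
    · rw [← Set.compl_singleton_eq]
      exact (Set.finite_singleton 0).infinite_compl
  have hav : pC n a ∣ pC n v * ptC n a := ⟨-(ptC n v), by linear_combination h0⟩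
  have hdvd : pC n v = 0 ∨ pC n v ≠ 0 := em _
  rcases hdvd with hpv | hpv
  · apply hv0
    funext j
    have := coeff_pC v j
    rw [hpv, Polynomial.coeff_zero] at this
    exact_mod_cast this.symm
  · obtain ⟨g, hg⟩ := (coprime_pC_ptC a ha).dvd_of_dvd_mul_right hav
    have hg0 : g ≠ 0 := by
      intro h; rw [h, mul_zero] at hg; exact hpv hg
    have hdeg : (pC n a).natDegree = n := by
      apply le_antisymm (natDegree_pC_le a)
      exact Polynomial.le_natDegree_of_ne_zero (by rw [coeff_pC_n]; exact ha0)
    have hgdeg : g.natDegree = 0 := by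
      have h1 : (pC n v).natDegree = (pC n a).natDegree + g.natDegree :=
        hg ▸ Polynomial.natDegree_mul hpa0 hg0
      have h2 := natDegree_pC_le v
      omega
    have hgC : g = Polynomial.C (g.coeff 0) := Polynomial.eq_C_of_natDegree_eq_zero hgdeg
    set lam := g.coeff 0 with hlam
    -- v 0 = a 0 * lam
    have hv0c : ((v 0 : ℝ) : ℂ) = (a 0 : ℂ) * lam := by
      have := coeff_pC_n v
      rw [hg, hgC, Polynomial.coeff_mul_C, coeff_pC_n] at this
      exact this.symm
    -- pvt + C lam * pt = 0
    have hsum : ptC n v + Polynomial.C lam * ptC n a = 0 := by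
      have hfac : pC n a * (ptC n v + Polynomial.C lam * ptC n a) = 0 := by
        rw [hg, hgC] at h0
        linear_combination h0
      rcases mul_eq_zero.1 hfac with h | h
      · exact absurd h hpa0
      · exact h
    have hv0c2 : ((v 0 : ℝ) : ℂ) = -(lam * (a 0 : ℂ)) := by
      have := congrArg (fun p => Polynomial.coeff p 0) hsum
      simp only [Polynomial.coeff_add, Polynomial.coeff_zero, Polynomial.coeff_C_mul,
        coeff_ptC_zero] at this
      linear_combination this
    have hlam0 : lam = 0 := by
      have : (2 : ℂ) * lam * (a 0 : ℂ) = 0 := by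
        rw [hv0c] at hv0c2
        linear_combination hv0c2
      rcases mul_eq_zero.1 this with h | h
      · rcases mul_eq_zero.1 h with h2 | h2
        · norm_num at h2
        · exact h2
      · exact absurd h ha0
    apply hg0
    rw [hgC, hlam0, map_zero]


lemma qc_corr {n : ℕ} (a : Fin (n+1) → ℝ) (k : Fin (n+1)) : qc a k = corr n a a k.val := by
  rw [qc, corr, ← Fin.sum_univ_eq_sum_range (fun i => aR n a i * aR n a (i + k.val))]
  refine Finset.sum_congr rfl fun i _ => ?_
  rw [aR_fin, aR]
  by_cases h : (i:ℕ) + (k:ℕ) ≤ n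
  · rw [dif_pos h, dif_pos h]
  · rw [dif_neg h, dif_neg h, mul_zero]

lemma ppC_qc {n : ℕ} (a : Fin (n+1) → ℝ) (z : ℂ) (hz : z ≠ 0) :
    evC a z * evC a z⁻¹ = ppC (qc a) z := by
  rw [evC_mul a a z hz, ppC]
  have h1 : ∑ k : Fin (n+1), ((qc a k : ℝ) : ℂ) * (z ^ (k.val:ℤ) + z ^ (-(k.val:ℤ)))
      = ∑ t ∈ range (n+1), ((corr n a a t : ℝ) : ℂ) * (z ^ (t:ℤ) + z ^ (-(t:ℤ))) := by
    rw [← Fin.sum_univ_eq_sum_range (fun t => ((corr n a a t : ℝ) : ℂ) * (z ^ (t:ℤ) + z ^ (-(t:ℤ))))]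
    exact Finset.sum_congr rfl fun k _ => by rw [qc_corr]
  rw [h1]
  have h2 : ((qc a 0 : ℝ) : ℂ) = ((corr n a a 0 : ℝ) : ℂ) := by
    rw [qc_corr a 0]; norm_num
  rw [h2]
  have h3 : ∑ t ∈ range (n+1), ((corr n a a t : ℝ) : ℂ) * (z ^ (t:ℤ) + z ^ (-(t:ℤ)))
      = ∑ t ∈ range (n+1), ((corr n a a t : ℝ) : ℂ) * z ^ (t:ℤ)
        + ∑ t ∈ range (n+1), ((corr n a a t : ℝ) : ℂ) * z ^ (-(t:ℤ)) := by
    rw [← Finset.sum_add_distrib]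
    exact Finset.sum_congr rfl fun t _ => mul_add _ _ _
  rw [h3]

lemma toep_quad {n : ℕ} (c a : Fin (n+1) → ℝ) :
    dotProduct a ((Toep c).mulVec a) = pairCP c (qc a) := by
  set F : ℕ → ℕ → ℝ := fun k l => aR n a k * aR n a l * aR n c (max (k - l) (l - k)) with hFdef
  have hF2 : ∀ k l, n+1 ≤ l → F k l = 0 := fun k l hl => by
    simp [hFdef, aR_of_gt a (show n < l by omega)]
  have hF1 : ∀ k l, n+1 ≤ k → F k l = 0 := fun k l hk => by
    simp [hFdef, aR_of_gt a (show n < k by omega)]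
  have lhs : dotProduct a ((Toep c).mulVec a) = ∑ k ∈ range (n+1), ∑ l ∈ range (n+1), F k l := by
    rw [dotProduct]
    rw [← Fin.sum_univ_eq_sum_range (fun k => ∑ l ∈ range (n+1), F k l)]
    refine Finset.sum_congr rfl fun i _ => ?_
    rw [Matrix.mulVec, dotProduct, Finset.mul_sum,
      ← Fin.sum_univ_eq_sum_range (fun l => F i.val l)]
    refine Finset.sum_congr rfl fun j _ => ?_
    simp only [hFdef]
    rw [aR_fin, aR_fin]
    have hT : Toep c i j = aR n c (max ((i:ℕ) - (j:ℕ)) ((j:ℕ) - (i:ℕ))) := by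
      rw [Toep, aR, dif_pos (by have := i.isLt; have := j.isLt; omega)]
    rw [hT]; ring
  have hfin : ∑ t ∈ range (n+1), aR n c t * corr n a a t = ∑ k : Fin (n+1), c k * qc a k := by
    rw [← Fin.sum_univ_eq_sum_range (fun t => aR n c t * corr n a a t)]
    exact Finset.sum_congr rfl fun k _ => by rw [aR_fin, qc_corr]
  have half1 : ∑ k ∈ range (n+1), ∑ l ∈ range (n+1), (if k ≤ l then F k l else 0)
      = ∑ t ∈ range (n+1), aR n c t * corr n a a t := by
    rw [half_sum (n+1) F hF2, Finset.sum_comm]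
    refine Finset.sum_congr rfl fun t _ => ?_
    rw [corr, Finset.mul_sum]
    refine Finset.sum_congr rfl fun k _ => ?_
    simp only [hFdef]
    rw [show max (k - (k+t)) ((k+t) - k) = t by omega]
    ring
  have half2 : ∑ k ∈ range (n+1), ∑ l ∈ range (n+1), (if l ≤ k then F k l else 0)
      = ∑ t ∈ range (n+1), aR n c t * corr n a a t := by
    rw [show ∑ k ∈ range (n+1), ∑ l ∈ range (n+1), (if l ≤ k then F k l else 0)
        = ∑ l ∈ range (n+1), ∑ k ∈ range (n+1), (if l ≤ k then F k l else 0) from Finset.sum_comm]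
    rw [half_sum (n+1) (fun l k => F k l) (fun k l hl => hF1 l k hl), Finset.sum_comm]
    refine Finset.sum_congr rfl fun t _ => ?_
    rw [corr, Finset.mul_sum]
    refine Finset.sum_congr rfl fun p _ => ?_
    simp only [hFdef]
    rw [show max ((p+t) - p) (p - (p+t)) = t by omega]
    ring
  have hdiag : ∑ k ∈ range (n+1), F k k = c 0 * qc a 0 := by
    rw [qc_corr a 0, show ((0 : Fin (n+1)) : ℕ) = 0 from rfl, corr, Finset.mul_sum]
    refine Finset.sum_congr rfl fun k _ => ?_
    simp only [hFdef]
    simp only [Nat.add_zero, Nat.sub_self, max_self]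
    rw [show aR n c 0 = c 0 from aR_fin c 0]
    ring
  rw [lhs, full_split (n+1) F, half1, half2, hdiag, pairCP, hfin]
  ring


lemma zeta_ne_zero (N : ℕ) (j : ℤ) : zeta N j ≠ 0 := Complex.exp_ne_zero _

lemma zeta_norm (N : ℕ) (j : ℤ) : ‖zeta N j‖ = 1 := by
  rw [zeta, Complex.norm_exp]
  convert Real.exp_zero using 2
  have : (Real.pi : ℂ) * Complex.I * (j:ℂ) / (N:ℂ) = ((Real.pi * j / N : ℝ) : ℂ) * Complex.I := by
    push_cast; ring
  rw [this]
  simp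

lemma evC_conj {n : ℕ} (a : Fin (n+1) → ℝ) (z : ℂ) :
    evC a ((starRingEnd ℂ) z) = (starRingEnd ℂ) (evC a z) := by
  rw [evC, evC, map_sum]
  refine Finset.sum_congr rfl fun k _ => ?_
  rw [_root_.map_mul, Complex.conj_ofReal, map_zpow₀]

lemma ppC_pos {n : ℕ} (a : Fin (n+1) → ℝ) (N : ℕ) (j : ℤ)
    (hne : evC a (zeta N j) ≠ 0) : 0 < (ppC (qc a) (zeta N j)).re := by
  rw [← ppC_qc a _ (zeta_ne_zero N j)]
  rw [Complex.inv_eq_conj (zeta_norm N j), evC_conj]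
  rw [Complex.mul_conj]
  rw [Complex.ofReal_re]
  exact Complex.normSq_pos.2 hne

lemma Jd_eq_Fd (N : ℕ) {n : ℕ} (c b : Fin (n+1) → ℝ) :
    Jd N c b = fun a => Fd N c b (qc a) := by
  funext a
  rw [Jd, Fd, toep_quad]
  congr 2
  refine Finset.sum_congr rfl fun j _ => ?_
  rw [ppC_qc a _ (zeta_ne_zero N j)]

lemma ppC_re {n : ℕ} (q : Fin (n+1) → ℝ) (z : ℂ) :
    (ppC q z).re = ∑ k : Fin (n+1), q k * (z ^ (k.val:ℤ) + z ^ (-(k.val:ℤ))).re - q 0 := by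
  rw [ppC, Complex.sub_re, Complex.ofReal_re, Complex.re_sum]
  congr 1
  refine Finset.sum_congr rfl fun k _ => ?_
  rw [Complex.mul_re, Complex.ofReal_re, Complex.ofReal_im, zero_mul, sub_zero]

lemma diff_ppC_re {n : ℕ} (z : ℂ) (q0 : Fin (n+1) → ℝ) :
    DifferentiableAt ℝ (fun q : Fin (n+1) → ℝ => (ppC q z).re) q0 := by
  have : (fun q : Fin (n+1) → ℝ => (ppC q z).re)
      = fun q => ∑ k : Fin (n+1), q k * (z ^ (k.val:ℤ) + z ^ (-(k.val:ℤ))).re - q 0 := by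
    funext q; rw [ppC_re]
  rw [this]
  apply DifferentiableAt.sub
  · apply DifferentiableAt.fun_sum
    intro k _
    exact (ContinuousLinearMap.proj (R := ℝ) (φ := fun _ : Fin (n+1) => ℝ) k).differentiableAt.mul_const _
  · exact (ContinuousLinearMap.proj (R := ℝ) (φ := fun _ : Fin (n+1) => ℝ) (0 : Fin (n+1))).differentiableAt

lemma diff_Fd (N : ℕ) {n : ℕ} (c b : Fin (n+1) → ℝ) (q0 : Fin (n+1) → ℝ)
    (hpos : ∀ j ∈ Idx N, (ppC q0 (zeta N j)).re ≠ 0) :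
    DifferentiableAt ℝ (Fd N c b) q0 := by
  have hsum : DifferentiableAt ℝ (fun q : Fin (n+1) → ℝ => ∑ k : Fin (n+1), c k * q k) q0 :=
    DifferentiableAt.fun_sum (fun k _ =>
      ((ContinuousLinearMap.proj (R := ℝ) (φ := fun _ : Fin (n+1) => ℝ) k).differentiableAt.const_mul (c k)))
  have h1 : DifferentiableAt ℝ (fun q : Fin (n+1) → ℝ => pairCP c q) q0 :=
    (hsum.const_mul 2).sub
      ((ContinuousLinearMap.proj (R := ℝ) (φ := fun _ : Fin (n+1) => ℝ) (0 : Fin (n+1))).differentiableAt.const_mul (c 0))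
  have h2 : DifferentiableAt ℝ
      (fun q : Fin (n+1) → ℝ => ∑ j ∈ Idx N, (PPd b (zeta N j)).re * Real.log ((ppC q (zeta N j)).re)) q0 :=
    DifferentiableAt.fun_sum (fun j hj => ((diff_ppC_re (zeta N j) q0).log (hpos j hj)).const_mul _)
  refine h1.sub ?_
  simpa [div_eq_mul_inv] using h2.mul_const (2*(N:ℝ))⁻¹

theorem grad_chain (N : ℕ) {n : ℕ} (c b : Fin (n+1) → ℝ) (a : Fin (n+1) → ℝ)
    (hne : ∀ j ∈ Idx N, evC a (zeta N j) ≠ 0) :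
    gradVec (Jd N c b) a = (JacQ a)ᵀ.mulVec (gradVec (Fd N c b) (qc a)) := by
  have hq : HasFDerivAt (fun x (i : Fin (n+1)) => qc x i)
      (ContinuousLinearMap.pi (fun k => Lq n a k)) a :=
    hasFDerivAt_pi.2 (fun k => hasFDerivAt_qc a k)
  have hq' : HasFDerivAt qc (ContinuousLinearMap.pi (fun k => Lq n a k)) a := hq
  have hFdiff : DifferentiableAt ℝ (Fd N c b) (qc a) :=
    diff_Fd N c b (qc a) (fun j hj => ne_of_gt (ppC_pos a N j (hne j hj)))
  funext i
  have hJd := Jd_eq_Fd N c b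
  have lhs1 : gradVec (Jd N c b) a i
      = fderiv ℝ ((Fd N c b) ∘ qc) a (Pi.single i 1) := by
    rw [gradVec, hJd]
    rfl
  rw [lhs1, fderiv_comp a hFdiff hq'.differentiableAt]
  rw [hq'.fderiv]
  set w : Fin (n+1) → ℝ := (ContinuousLinearMap.pi (fun k => Lq n a k)) (Pi.single i 1) with hw
  have hwk : ∀ k, w k = JacQ a k i := by
    intro k
    rw [hw, ContinuousLinearMap.pi_apply, JacQ, (hasFDerivAt_qc a k).fderiv]
  have hdecomp : w = ∑ k : Fin (n+1), w k • (Pi.single k 1 : Fin (n+1) → ℝ) := by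
    funext m
    rw [Finset.sum_apply]
    have : ∀ k : Fin (n+1), (w k • (Pi.single k 1 : Fin (n+1) → ℝ)) m = if m = k then w k else 0 := by
      intro k
      rw [Pi.smul_apply, Pi.single_apply]
      by_cases h : m = k
      · rw [if_pos h, if_pos h, smul_eq_mul, mul_one]
      · rw [if_neg h, if_neg h, smul_eq_mul, mul_zero]
    rw [Finset.sum_congr rfl fun k _ => this k]
    rw [Finset.sum_ite_eq Finset.univ m w]
    simp
  rw [ContinuousLinearMap.comp_apply]
  rw [show (ContinuousLinearMap.pi (fun k => Lq n a k)) (Pi.single i 1) = w from rfl]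
  rw [hdecomp, map_sum]
  have rhs1 : ((JacQ a)ᵀ.mulVec (gradVec (Fd N c b) (qc a))) i
      = ∑ k : Fin (n+1), JacQ a k i * gradVec (Fd N c b) (qc a) k := by
    rw [Matrix.mulVec, dotProduct]
    exact Finset.sum_congr rfl fun k _ => by rw [Matrix.transpose_apply]
  rw [rhs1]
  refine Finset.sum_congr rfl fun k _ => ?_
  rw [ContinuousLinearMap.map_smul, smul_eq_mul, hwk k]
  rfl


/-- (i) the Jacobian `J(a)` of `a ↦ q(a)` is the sum of a Hankel and
an upper-triangular Toeplitz matrix of the coefficients of `a`; (ii) `J(a)` is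
nonsingular for every Schur `a`; (iii) the chain rule `∇𝕁_P(a) = J(a)ᵀ ∇F(q(a))`. -/
theorem stmt11 (N n : ℕ) (hn : 1 ≤ n) (hNn : n < N)
    (c b : Fin (n + 1) → ℝ) (hb0 : b 0 = 1) :
    (∀ a : Fin (n + 1) → ℝ, JacQ a = Hank a + UTToep a) ∧
    (∀ a : Fin (n + 1) → ℝ, SchurVec a → (JacQ a).det ≠ 0) ∧
    (∀ a : Fin (n + 1) → ℝ, (∀ j ∈ Idx N, evC a (zeta N j) ≠ 0) →
      gradVec (Jd N c b) a = (JacQ a)ᵀ.mulVec (gradVec (Fd N c b) (qc a))) := by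
  refine ⟨fun a => jacQ_eq a, fun a ha => ?_, fun a hne => grad_chain N c b a hne⟩
  rw [jacQ_eq a]
  exact hank_uttoep_det_ne a ha


end
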